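/- For each i with 1 ≤ i ≤ n−1, define the vector v_i ∈ R^{C(n,2)} indexed by pairs {j<k} with (v_i)_{jk} = 1 if i = j, −1 if i = k, and 0 otherwise. Then v_1, …, v_{n−1} are linearly independent and each v_i is orthogonal to every column of the incidence matrix of any 3-tournament on [n]. -/

import Mathlib

/-- The signed indicator of the directed edge `u → v`, as a (skew-symmetric) function on
ordered pairs of vertices: entry `+1` at `(u, v)`, `-1` at `(v, u)`, `0` elsewhere.
A vector indexed by 2-sets `{i < j}` with entry `+1` for an induced edge `i → j` and `-1`
for `j → i` is recorded by its values on ordered pairs. -/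
def edgeVec {V : Type*} [DecidableEq V] (u v : V) : V → V → ℝ := fun i j =>
  (if i = u ∧ j = v then 1 else 0) - (if i = v ∧ j = u then 1 else 0)

/-- The signed incidence vector of the oriented triple `→abc`, which induces the directed
edges `a → b`, `b → c`, `c → a`. -/
def incVec {V : Type*} [DecidableEq V] (a b c : V) : V → V → ℝ :=
  edgeVec a b + edgeVec b c + edgeVec c a

/-- Vertices are `Fin n`; an (oriented) triple is recorded as an ordered triple. -/
abbrev Triple (n : ℕ) := Fin n × Fin n × Fin n

/-- The ordered triple `(a, b, c)` is sorted: `a < b < c`. -/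
def Sorted3 {n : ℕ} (p : Triple n) : Prop := p.1 < p.2.1 ∧ p.2.1 < p.2.2

instance {n : ℕ} : DecidablePred (Sorted3 (n := n)) := fun _ => instDecidableAnd

/-- An orientation function `ω` assigns to each (sorted) triple one of its two cyclic
orientations: `true` for `→abc`, `false` for `→acb`.  The incidence vector of the triple
`{a, b, c}` under this orientation. -/
def oVec {n : ℕ} (ω : Triple n → Bool) (p : Triple n) : Fin n → Fin n → ℝ :=
  if ω p then incVec p.1 p.2.1 p.2.2 else incVec p.1 p.2.2 p.2.1

/-- `C` is a cycle of the oriented 3-graph with (sorted) triple set `D` and orientation `ω`: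
a nonempty subset of `D` admitting strictly positive weights whose weighted incidence
vectors sum to zero. -/
def IsCycle {n : ℕ} (ω : Triple n → Bool) (D : Finset (Triple n)) (C : Finset (Triple n)) :
    Prop :=
  C.Nonempty ∧ C ⊆ D ∧
    ∃ α : Triple n → ℝ, (∀ p ∈ C, 0 < α p) ∧ ∑ p ∈ C, α p • oVec ω p = 0

/-- The triple set of the complete oriented 3-graph (3-tournament) on `n` vertices: all
sorted triples. -/
def allTriples (n : ℕ) : Finset (Triple n) := Finset.univ.filter Sorted3

/-- The column space of the incidence matrix of the 3-tournament on `n` vertices with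
orientation `ω`: the span of the incidence vectors of all its oriented triples. -/
def colSpace {n : ℕ} (ω : Triple n → Bool) : Submodule ℝ (Fin n → Fin n → ℝ) :=
  Submodule.span ℝ (oVec ω '' {p | Sorted3 p})

/-- The vector `v_i ∈ ℝ^{C(n,2)}` indexed by pairs `{j < k}`, with entry `1` if `i = j`,
`-1` if `i = k`, and `0` otherwise (recorded skew-symmetrically on ordered pairs). -/
def vVec {n : ℕ} (i : Fin n) : Fin n → Fin n → ℝ := fun j k =>
  (if j = i then 1 else 0) - (if k = i then 1 else 0)


lemma sum_vVec_edgeVec {n : ℕ} (i u v : Fin n) :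
    ∑ j : Fin n, ∑ k : Fin n, vVec i j k * edgeVec u v j k
      = vVec i u v - vVec i v u := by
  simp only [edgeVec, mul_sub, Finset.sum_sub_distrib, ite_and, mul_ite, mul_one, mul_zero,
    Finset.sum_ite_irrel, Finset.sum_const_zero, Finset.sum_ite_eq', Finset.mem_univ, if_true]

lemma sum_vVec_incVec {n : ℕ} (i a b c : Fin n) :
    ∑ j : Fin n, ∑ k : Fin n, vVec i j k * incVec a b c j k = 0 := by
  calc ∑ j : Fin n, ∑ k : Fin n, vVec i j k * incVec a b c j k
      = ∑ j : Fin n, ∑ k : Fin n, (vVec i j k * edgeVec a b j k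
          + vVec i j k * edgeVec b c j k + vVec i j k * edgeVec c a j k) := by
        simp only [incVec, Pi.add_apply, mul_add]
    _ = (vVec i a b - vVec i b a) + (vVec i b c - vVec i c b)
          + (vVec i c a - vVec i a c) := by
        simp only [Finset.sum_add_distrib, sum_vVec_edgeVec]
    _ = 0 := by simp only [vVec]; ring

/-- The vectors `v_1, …, v_{n-1}` are linearly independent, and each `v_i` is orthogonal
to every column of the incidence matrix of any 3-tournament on `[n]`. -/
theorem vVec_linearIndependent_and_orthogonal (n : ℕ) :
    LinearIndependent ℝ (fun i : Fin (n - 1) =>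
      vVec (⟨i.1, lt_of_lt_of_le i.2 (Nat.sub_le n 1)⟩ : Fin n)) ∧
    ∀ (ω : Triple n → Bool) (p : Triple n), Sorted3 p → ∀ i : Fin (n - 1),
      ∑ j : Fin n, ∑ k : Fin n,
        vVec (⟨i.1, lt_of_lt_of_le i.2 (Nat.sub_le n 1)⟩ : Fin n) j k * oVec ω p j k = 0 := by
  constructor
  · rw [Fintype.linearIndependent_iff]
    intro g hg i
    have hn : n - 1 < n := by have := i.2; omega
    have h := congrFun (congrFun hg ⟨i.1, lt_of_lt_of_le i.2 (Nat.sub_le n 1)⟩) ⟨n - 1, hn⟩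
    simp only [Finset.sum_apply, Pi.smul_apply, smul_eq_mul, Pi.zero_apply] at h
    rw [Finset.sum_eq_single i] at h
    · simpa [vVec, Fin.ext_iff, if_neg (show n - 1 ≠ i.1 by have := i.2; omega)] using h
    · intro j _ hji
      have h1 : j.1 ≠ i.1 := fun e => hji (Fin.ext e)
      have h2 : j.1 ≠ n - 1 := by have := j.2; omega
      simp [vVec, Fin.ext_iff, h1.symm, h2.symm]
    · simp
  · intro ω p _ i
    unfold oVec
    split <;> exact sum_vVec_incVec _ _ _ _
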